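/- arXiv:1004.2385 — 2 statements merged into one kernel-verified Lean document; each statement's English description precedes it below -/
import Mathlib

section
/- Violation of conditional regularity for the discrete alloy-type model: Let d = 1 and let the single-site potential be u(0) = 1, u(−1) = a with a > 0 and u(k) = 0 for k ∉ {−1, 0}. Let (ω_k)_{k∈ℤ} be i.i.d. real random variables whose common distribution has a density ρ of bounded support whose support has infimum 0 (so that ω_k ≥ 0 almost surely). Set V_ω(x) = ω_x + a ω_{x+1}, and for ε > 0 define the events B_ε = { V_ω(−1) ∈ [0,ε] and V_ω(1) ∈ [0,ε] } and A_ε = { V_ω(0) ∈ [0, ε(a + 1/a)] }. Then B_ε ⊆ A_ε up to a null set, and consequently, for every ε > 0 with P(B_ε) > 0, the conditional probability satisfies P(A_ε | B_ε) = 1. -/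
open MeasureTheory ProbabilityTheory
open scoped ENNReal

/-- **Violation of conditional regularity for the discrete alloy-type model**
(Section 3 of "Spectral properties of discrete alloy-type models").
In dimension one, with single-site potential `u(0) = 1`, `u(-1) = a > 0` (so that
`V_ω(x) = ω_x + a ω_{x+1}`) and i.i.d. coupling constants whose density `ρ` has bounded
support with infimum `0`, the event
`B_ε = {V_ω(-1) ∈ [0,ε] ∧ V_ω(1) ∈ [0,ε]}` is, up to a null set, contained in
`A_ε = {V_ω(0) ∈ [0, ε(a + 1/a)]}`; consequently `ℙ(A_ε | B_ε) = 1` whenever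
`ℙ(B_ε) > 0`. -/
theorem conditional_regularity_violated
    (a : ℝ) (ha : 0 < a)
    (Ω : Type*) [MeasurableSpace Ω] (P : Measure Ω) [IsProbabilityMeasure P]
    (ω : ℤ → Ω → ℝ) (ρ : ℝ → ℝ)
    (hmeas : ∀ k, Measurable (ω k))
    (hindep : iIndepFun ω P)
    (hdist : ∀ k, P.map (ω k) = volume.withDensity fun t => ENNReal.ofReal (ρ t))
    (hρ_nonneg : ∀ t, 0 ≤ ρ t)
    (hρ_bddsupp : Bornology.IsBounded (Function.support ρ))
    (hρ_ne : (Function.support ρ).Nonempty)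
    (hρ_inf : sInf (Function.support ρ) = 0)
    (ε : ℝ) (hε : 0 < ε) :
    P ({wp | ω (-1) wp + a * ω 0 wp ∈ Set.Icc (0 : ℝ) ε ∧
             ω 1 wp + a * ω 2 wp ∈ Set.Icc (0 : ℝ) ε} \
       {wp | ω 0 wp + a * ω 1 wp ∈ Set.Icc (0 : ℝ) (ε * (a + 1 / a))}) = 0 ∧
    (P {wp | ω (-1) wp + a * ω 0 wp ∈ Set.Icc (0 : ℝ) ε ∧
             ω 1 wp + a * ω 2 wp ∈ Set.Icc (0 : ℝ) ε} ≠ 0 →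
      ProbabilityTheory.cond P
          {wp | ω (-1) wp + a * ω 0 wp ∈ Set.Icc (0 : ℝ) ε ∧
                ω 1 wp + a * ω 2 wp ∈ Set.Icc (0 : ℝ) ε}
          {wp | ω 0 wp + a * ω 1 wp ∈ Set.Icc (0 : ℝ) (ε * (a + 1 / a))} = 1) := by

  have hρ0 : ∀ t : ℝ, t < 0 → ρ t = 0 := by
    intro t ht
    by_contra h
    have hmem : t ∈ Function.support ρ := h
    have := csInf_le hρ_bddsupp.bddBelow hmem
    rw [hρ_inf] at this
    linarith
  have hnull : ∀ k : ℤ, P {wp | ω k wp < 0} = 0 := by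
    intro k
    have h1 : P {wp | ω k wp < 0} = (P.map (ω k)) (Set.Iio 0) := by
      rw [Measure.map_apply (hmeas k) measurableSet_Iio]; rfl
    rw [h1, hdist k, withDensity_apply _ measurableSet_Iio]
    have hae : ∀ᵐ t ∂(volume.restrict (Set.Iio (0:ℝ))),
        ENNReal.ofReal (ρ t) = 0 :=
      (ae_restrict_iff' measurableSet_Iio).2
        (Filter.Eventually.of_forall fun t ht => by simp [hρ0 t ht])
    rw [lintegral_congr_ae hae, lintegral_zero]
  set Bs := {wp | ω (-1) wp + a * ω 0 wp ∈ Set.Icc (0 : ℝ) ε ∧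
             ω 1 wp + a * ω 2 wp ∈ Set.Icc (0 : ℝ) ε} with hBs
  set As := {wp | ω 0 wp + a * ω 1 wp ∈ Set.Icc (0 : ℝ) (ε * (a + 1 / a))} with hAs
  have hAmeas : MeasurableSet As := by
    have : As = (fun wp => ω 0 wp + a * ω 1 wp) ⁻¹' Set.Icc 0 (ε * (a + 1 / a)) := rfl
    rw [this]
    exact ((hmeas 0).add ((hmeas 1).const_mul a)) measurableSet_Icc
  have hBmeas : MeasurableSet Bs := by
    have : Bs = ((fun wp => ω (-1) wp + a * ω 0 wp) ⁻¹' Set.Icc 0 ε) ∩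
        ((fun wp => ω 1 wp + a * ω 2 wp) ⁻¹' Set.Icc 0 ε) := rfl
    rw [this]
    exact (((hmeas (-1)).add ((hmeas 0).const_mul a)) measurableSet_Icc).inter
      (((hmeas 1).add ((hmeas 2).const_mul a)) measurableSet_Icc)
  have hN : P ({wp | ω (-1) wp < 0} ∪ {wp | ω 0 wp < 0} ∪ {wp | ω 1 wp < 0}
      ∪ {wp | ω 2 wp < 0}) = 0 :=
    measure_union_null (measure_union_null (measure_union_null (hnull _) (hnull _))
      (hnull _)) (hnull _)
  have hsub : Bs \ As ⊆ ({wp | ω (-1) wp < 0} ∪ {wp | ω 0 wp < 0} ∪ {wp | ω 1 wp < 0}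
      ∪ {wp | ω 2 wp < 0}) := by
    intro wp hwp
    by_contra hn
    simp only [Set.mem_union, Set.mem_setOf_eq, not_or, not_lt] at hn
    obtain ⟨⟨⟨hm1, h0⟩, h1⟩, h2⟩ := hn
    obtain ⟨⟨hB1, hB2⟩, hA⟩ := hwp
    rw [Set.mem_Icc] at hB1 hB2
    apply hA
    have hAeq : wp ∈ As ↔ 0 ≤ ω 0 wp + a * ω 1 wp ∧
        ω 0 wp + a * ω 1 wp ≤ ε * (a + 1 / a) := Set.mem_Icc
    rw [hAeq]
    constructor
    · nlinarith
    · have key : a * (ω 0 wp + a * ω 1 wp) ≤ a * (ε * (a + 1 / a)) := by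
        have h1' : a * ω 0 wp ≤ ε := by linarith [hB1.2]
        have h2' : ω 1 wp ≤ ε := by nlinarith [hB2.2, mul_nonneg ha.le h2]
        have : a * (ε * (a + 1 / a)) = ε * a * a + ε := by
          field_simp
        rw [this]
        nlinarith [mul_le_mul_of_nonneg_left h2' (mul_nonneg ha.le ha.le)]
      exact le_of_mul_le_mul_left key ha
  have hdiff : P (Bs \ As) = 0 := measure_mono_null hsub hN
  refine ⟨hdiff, fun hB0 => ?_⟩
  have hinter : P (Bs ∩ As) = P Bs := by
    have := measure_inter_add_diff (μ := P) Bs hAmeas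
    rw [hdiff, add_zero] at this
    exact this
  rw [ProbabilityTheory.cond_apply hBmeas, hinter]
  exact ENNReal.inv_mul_cancel hB0 (measure_ne_top P Bs)
end

section
/- Weighted integral bound for W^{1,1} densities: Let g : ℝ → [0,∞) be integrable and absolutely continuous with integrable derivative g' (i.e. g(b) − g(a) = ∫_a^b g'(t) dt for all a ≤ b and ∫_ℝ |g'| < ∞), let s ∈ (0,1), δ ∈ ℂ and λ > 0. Then ∫_ℝ g(ξ) / |ξ − δ|^s dξ ≤ λ^{−s} ‖g‖_{L¹} + ‖g'‖_{L¹} · λ^{1−s} / (1−s). -/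
open MeasureTheory
open scoped ENNReal

/-- **Weighted integral bound for `W^{1,1}` densities**
(second inequality in Eq. (4) of "Spectral properties of discrete alloy-type models").
For nonnegative, integrable `g : ℝ → ℝ` which is absolutely continuous with integrable
derivative `g'`, and for `s ∈ (0,1)`, `δ ∈ ℂ`, `λ > 0`:
`∫ g(ξ)/|ξ-δ|^s dξ ≤ λ^{-s} ‖g‖_{L¹} + ‖g'‖_{L¹} · λ^{1-s}/(1-s)`. -/
theorem weighted_integral_bound_W11
    (g g' : ℝ → ℝ) (hg_nonneg : ∀ t, 0 ≤ g t)
    (hg_int : Integrable g) (hg'_int : Integrable g')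
    (hac : ∀ a b : ℝ, g b - g a = ∫ t in a..b, g' t)
    (s : ℝ) (hs : s ∈ Set.Ioo (0 : ℝ) 1) (δ : ℂ) (lam : ℝ) (hlam : 0 < lam) :
    ∫⁻ ξ : ℝ, ENNReal.ofReal (g ξ / ‖(ξ : ℂ) - δ‖ ^ s)
      ≤ ENNReal.ofReal
          (lam ^ (-s) * (∫ t, g t) +
            (∫ t, |g' t|) * (lam ^ (1 - s) / (1 - s))) := by
  obtain ⟨hs0, hs1⟩ := hs
  set I : ℝ := ∫ t, |g' t| with hIdef
  have habs_int : Integrable (fun t => |g' t|) := hg'_int.abs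
  have hI0 : 0 ≤ I := integral_nonneg fun t => abs_nonneg _
  -- Step 1: `2 * g ξ ≤ I` for every `ξ`.
  have hsup : ∀ ξ : ℝ, 2 * g ξ ≤ I := by
    intro ξ
    by_contra hcon
    push_neg at hcon
    set m : ℝ := 2 * g ξ - I with hm
    have hm0 : 0 < m := by simp only [hm]; linarith
    have hJle : ∀ u v : ℝ, u ≤ v → (∫ t in u..v, |g' t|) ≤ I := by
      intro u v huv
      rw [intervalIntegral.integral_of_le huv]
      exact setIntegral_le_integral habs_int
        (Filter.Eventually.of_forall fun t => abs_nonneg _)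
    have key : ∀ a : ℝ, a ≤ ξ → m ≤ g a + g (2 * ξ - a) := by
      intro a ha
      have hb : ξ ≤ 2 * ξ - a := by linarith
      have h1 : g ξ - g a = ∫ t in a..ξ, g' t := hac a ξ
      have h2 : g (2 * ξ - a) - g ξ = ∫ t in ξ..(2 * ξ - a), g' t := hac ξ _
      have hii : ∀ u v : ℝ, IntervalIntegrable g' volume u v :=
        fun u v => hg'_int.intervalIntegrable
      have hiiabs : ∀ u v : ℝ, IntervalIntegrable (fun t => |g' t|) volume u v :=
        fun u v => habs_int.intervalIntegrable
      have hb1 : (∫ t in a..ξ, g' t) ≤ ∫ t in a..ξ, |g' t| :=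
        intervalIntegral.integral_mono_on ha (hii a ξ) (hiiabs a ξ)
          (fun x _ => le_abs_self _)
      have hb2 : -(∫ t in ξ..(2 * ξ - a), g' t) ≤ ∫ t in ξ..(2 * ξ - a), |g' t| := by
        rw [← intervalIntegral.integral_neg]
        exact intervalIntegral.integral_mono_on hb (hii ξ _).neg (hiiabs ξ _)
          (fun x _ => neg_le_abs _)
      have hadd : (∫ t in a..ξ, |g' t|) + (∫ t in ξ..(2 * ξ - a), |g' t|)
          = ∫ t in a..(2 * ξ - a), |g' t| :=
        intervalIntegral.integral_add_adjacent_intervals (hiiabs a ξ) (hiiabs ξ _)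
      have hItot : (∫ t in a..(2 * ξ - a), |g' t|) ≤ I := hJle a _ (by linarith)
      simp only [hm]
      linarith
    set h : ℝ → ℝ := fun a => g a + g (2 * ξ - a) with hh
    have hint : Integrable h :=
      hg_int.add ((integrable_comp_sub_left g (2 * ξ)).mpr hg_int)
    have hfin : (∫⁻ a, ENNReal.ofReal (h a)) < ⊤ := hint.lintegral_lt_top
    have hbig : (⊤ : ℝ≥0∞) ≤ ∫⁻ a, ENNReal.ofReal (h a) := by
      calc (⊤ : ℝ≥0∞) = ENNReal.ofReal m * volume (Set.Iic ξ) := by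
            rw [Real.volume_Iic, ENNReal.mul_top
              (by simpa using (ENNReal.ofReal_pos.mpr hm0).ne')]
        _ = ∫⁻ _ in Set.Iic ξ, ENNReal.ofReal m := (setLIntegral_const _ _).symm
        _ ≤ ∫⁻ a in Set.Iic ξ, ENNReal.ofReal (h a) := by
            refine setLIntegral_mono' measurableSet_Iic fun a ha => ?_
            exact ENNReal.ofReal_le_ofReal (key a ha)
        _ ≤ ∫⁻ a, ENNReal.ofReal (h a) := setLIntegral_le_lintegral _ _
    exact (lt_irrefl _ (hbig.trans_lt hfin)).elim
  set δ₀ : ℝ := δ.re with hδ₀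
  set C : ℝ := I / 2 with hC
  have hC0 : 0 ≤ C := by positivity
  have hgC : ∀ ξ, g ξ ≤ C := fun ξ => by
    have := hsup ξ; simp only [hC]; linarith
  have h1s : (0:ℝ) < 1 - s := by linarith
  -- pointwise bound
  have hpt : ∀ᵐ ξ : ℝ,
      ENNReal.ofReal (g ξ / ‖(ξ : ℂ) - δ‖ ^ s)
        ≤ ENNReal.ofReal (lam ^ (-s) * g ξ)
          + ENNReal.ofReal
              (Set.indicator (Metric.ball δ₀ lam) (fun x => C * |x - δ₀| ^ (-s)) ξ) := by
    have hne : ∀ᵐ ξ : ℝ, ξ ≠ δ₀ :=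
      compl_mem_ae_iff.mpr (measure_singleton δ₀)
    filter_upwards [hne] with ξ hξ
    set r : ℝ := ‖(ξ : ℂ) - δ‖ with hr
    have hr₀pos : 0 < |ξ - δ₀| := abs_pos.mpr (sub_ne_zero.mpr hξ)
    have hr₀r : |ξ - δ₀| ≤ r := by
      have := Complex.abs_re_le_norm ((ξ : ℂ) - δ)
      simpa [hr, Complex.sub_re, Complex.ofReal_re] using this
    have hrpos : 0 < r := lt_of_lt_of_le hr₀pos hr₀r
    rcases le_or_gt lam |ξ - δ₀| with hfar | hnear
    · -- far region
      refine le_trans ?_ le_self_add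
      apply ENNReal.ofReal_le_ofReal
      have hlams : lam ^ s ≤ r ^ s :=
        Real.rpow_le_rpow hlam.le (hfar.trans hr₀r) hs0.le
      calc g ξ / r ^ s ≤ g ξ / lam ^ s :=
            div_le_div_of_nonneg_left (hg_nonneg ξ) (Real.rpow_pos_of_pos hlam s) hlams
        _ = lam ^ (-s) * g ξ := by
            rw [Real.rpow_neg hlam.le, div_eq_mul_inv, mul_comm]
    · -- near region
      refine le_trans ?_ le_add_self
      apply ENNReal.ofReal_le_ofReal
      have hmem : ξ ∈ Metric.ball δ₀ lam := by
        simpa [Real.dist_eq] using hnear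
      rw [Set.indicator_of_mem hmem]
      have h1 : g ξ / r ^ s ≤ g ξ / |ξ - δ₀| ^ s :=
        div_le_div_of_nonneg_left (hg_nonneg ξ)
          (Real.rpow_pos_of_pos hr₀pos s)
          (Real.rpow_le_rpow hr₀pos.le hr₀r hs0.le)
      have h2 : g ξ / |ξ - δ₀| ^ s ≤ C / |ξ - δ₀| ^ s :=
        (div_le_div_iff_of_pos_right (Real.rpow_pos_of_pos hr₀pos s)).mpr (hgC ξ)
      calc g ξ / r ^ s ≤ C / |ξ - δ₀| ^ s := h1.trans h2
        _ = C * |ξ - δ₀| ^ (-s) := by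
            rw [Real.rpow_neg (abs_nonneg _), div_eq_mul_inv]
  -- integrate
  have hmeas1 : AEMeasurable (fun ξ : ℝ => ENNReal.ofReal (lam ^ (-s) * g ξ)) :=
    ENNReal.measurable_ofReal.comp_aemeasurable (hg_int.aemeasurable.const_mul _)
  have step1 : (∫⁻ ξ : ℝ, ENNReal.ofReal (g ξ / ‖(ξ : ℂ) - δ‖ ^ s))
      ≤ (∫⁻ ξ : ℝ, ENNReal.ofReal (lam ^ (-s) * g ξ))
        + ∫⁻ ξ : ℝ, ENNReal.ofReal
            (Set.indicator (Metric.ball δ₀ lam) (fun x => C * |x - δ₀| ^ (-s)) ξ) := by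
    rw [← lintegral_add_left' hmeas1]
    exact lintegral_mono_ae hpt
  -- first summand
  have hval1 : (∫⁻ ξ : ℝ, ENNReal.ofReal (lam ^ (-s) * g ξ))
      = ENNReal.ofReal (lam ^ (-s) * ∫ t, g t) := by
    rw [← integral_const_mul]
    exact (ofReal_integral_eq_lintegral_ofReal (hg_int.const_mul _)
      (Filter.Eventually.of_forall fun t =>
        mul_nonneg (Real.rpow_nonneg hlam.le _) (hg_nonneg t))).symm
  -- integrability of `|x - δ₀| ^ (-s)` pieces
  have hs' : (-1 : ℝ) < -s := by linarith
  have hii0 : IntervalIntegrable (fun x : ℝ => |x| ^ (-s)) volume 0 lam := by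
    refine (intervalIntegral.intervalIntegrable_rpow' (a := 0) (b := lam) hs').congr ?_
    intro x hx
    rw [Set.uIoc_of_le hlam.le] at hx
    show x ^ (-s) = |x| ^ (-s)
    rw [abs_of_nonneg hx.1.le]
  have hiineg : IntervalIntegrable (fun x : ℝ => |x| ^ (-s)) volume (-lam) 0 := by
    have h := (IntervalIntegrable.iff_comp_neg enorm_ne_top).mp hii0
    simp only [abs_neg, neg_zero] at h
    exact h.symm
  have hiibase : IntervalIntegrable (fun x : ℝ => |x| ^ (-s)) volume (-lam) lam :=
    hiineg.trans hii0
  have hiishift : IntervalIntegrable (fun x : ℝ => |x - δ₀| ^ (-s)) volume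
      (δ₀ - lam) (δ₀ + lam) := by
    have h := hiibase.comp_sub_right δ₀
    have e1 : -lam + δ₀ = δ₀ - lam := by ring
    have e2 : lam + δ₀ = δ₀ + lam := by ring
    rwa [e1, e2] at h
  have hball_le : δ₀ - lam ≤ δ₀ + lam := by linarith
  have hIO : IntegrableOn (fun x : ℝ => C * |x - δ₀| ^ (-s)) (Metric.ball δ₀ lam) := by
    rw [Real.ball_eq_Ioo]
    exact (((intervalIntegrable_iff_integrableOn_Ioc_of_le hball_le).mp
      hiishift).mono_set Set.Ioo_subset_Ioc_self).const_mul C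
  -- value of the inner integral
  have hinner : (∫ x in Metric.ball δ₀ lam, |x - δ₀| ^ (-s))
      = 2 * lam ^ (1 - s) / (1 - s) := by
    rw [Real.ball_eq_Ioo, ← integral_Ioc_eq_integral_Ioo,
      ← intervalIntegral.integral_of_le hball_le]
    have e1 : (∫ x in (δ₀ - lam)..(δ₀ + lam), |x - δ₀| ^ (-s))
        = ∫ x in (-lam)..lam, |x| ^ (-s) := by
      rw [intervalIntegral.integral_comp_sub_right (fun x => |x| ^ (-s)) δ₀]
      congr 1 <;> ring
    have hpos : (∫ x in (0:ℝ)..lam, |x| ^ (-s)) = lam ^ (1 - s) / (1 - s) := by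
      rw [intervalIntegral.integral_congr (g := fun x : ℝ => x ^ (-s))
        (fun x hx => by
          rw [Set.uIcc_of_le hlam.le] at hx
          show |x| ^ (-s) = x ^ (-s)
          rw [abs_of_nonneg hx.1]),
        integral_rpow (Or.inl hs')]
      rw [Real.zero_rpow (by linarith : -s + 1 ≠ 0)]
      have : -s + 1 = 1 - s := by ring
      rw [this, sub_zero]
    have hneg : (∫ x in (-lam)..(0:ℝ), |x| ^ (-s)) = lam ^ (1 - s) / (1 - s) := by
      have h := intervalIntegral.integral_comp_neg (a := (0:ℝ)) (b := lam)
        (fun x => |x| ^ (-s))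
      simp only [abs_neg, neg_zero] at h
      rw [← h, hpos]
    rw [e1, ← intervalIntegral.integral_add_adjacent_intervals hiineg hii0, hneg, hpos]
    ring
  -- second summand
  have hval2 : (∫⁻ ξ : ℝ, ENNReal.ofReal
        (Set.indicator (Metric.ball δ₀ lam) (fun x => C * |x - δ₀| ^ (-s)) ξ))
      = ENNReal.ofReal (C * (2 * lam ^ (1 - s) / (1 - s))) := by
    have heq : (fun ξ : ℝ => ENNReal.ofReal
        (Set.indicator (Metric.ball δ₀ lam) (fun x => C * |x - δ₀| ^ (-s)) ξ))
        = Set.indicator (Metric.ball δ₀ lam)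
            (fun x => ENNReal.ofReal (C * |x - δ₀| ^ (-s))) := by
      ext ξ
      by_cases hξ : ξ ∈ Metric.ball δ₀ lam <;> simp [hξ]
    rw [heq, lintegral_indicator measurableSet_ball,
      ← ofReal_integral_eq_lintegral_ofReal hIO
        (Filter.Eventually.of_forall fun x =>
          mul_nonneg hC0 (Real.rpow_nonneg (abs_nonneg _) _)),
      integral_const_mul, hinner]
  -- put everything together
  refine step1.trans ?_
  rw [hval1, hval2, ← ENNReal.ofReal_add
    (mul_nonneg (Real.rpow_nonneg hlam.le _) (integral_nonneg hg_nonneg))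
    (mul_nonneg hC0 (by positivity))]
  apply ENNReal.ofReal_le_ofReal
  have : C * (2 * lam ^ (1 - s) / (1 - s)) = I * (lam ^ (1 - s) / (1 - s)) := by
    rw [hC]; ring
  rw [this]
end
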